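/- For nonnegative compact self-adjoint operators X₁, X₂ on a Hilbert space and positive reals e₁, e₂, the number of eigenvalues of X₁ + X₂ that are ≥ e₁ + e₂ is at most the number of eigenvalues of X₁ that are ≥ e₁ plus the number of eigenvalues of X₂ that are ≥ e₂. -/

import Mathlib

open ContinuousLinearMap Filter
open scoped ComplexInnerProductSpace Topology

set_option linter.unusedSectionVars false

section Aux

variable {H : Type*} [NormedAddCommGroup H] [InnerProductSpace ℂ H] [CompleteSpace H]

lemma conj_mul_self_eq (w : ℂ) : (starRingEnd ℂ) w * w = ((‖w‖ ^ 2 : ℝ) : ℂ) := by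
  rw [← Complex.normSq_eq_conj_mul_self]
  norm_cast
  rw [← Complex.sq_norm]

/-- Cauchy–Schwarz for the sesquilinear form of a positive operator. -/
lemma pos_cs (T : H →L[ℂ] H) (hT : T.IsPositive) (x y : H) :
    ‖(⟪T x, y⟫ : ℂ)‖ ^ 2 ≤ RCLike.re ⟪T x, x⟫ * RCLike.re ⟪T y, y⟫ := by
  set u : ℂ := ⟪T x, y⟫ with hu
  rcases eq_or_ne u 0 with h0 | h0
  · rw [h0]
    simpa [reApplyInnerSelf_apply] using mul_nonneg (hT.2 x) (hT.2 y)
  have hsym : ∀ a b : H, (⟪T a, b⟫ : ℂ) = ⟪a, T b⟫ := hT.isSelfAdjoint.isSymmetric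
  have key : ∀ t : ℝ, 0 ≤ (‖u‖ ^ 2 * RCLike.re ⟪T y, y⟫) * (t * t) + (2 * ‖u‖ ^ 2) * t
      + RCLike.re ⟪T x, x⟫ := by
    intro t
    set z : ℂ := (t : ℂ) * (starRingEnd ℂ) u with hz
    have h1 : (0:ℝ) ≤ RCLike.re ⟪T (x + z • y), x + z • y⟫ := hT.2 _
    have hzu : z * u = ((t * ‖u‖ ^ 2 : ℝ) : ℂ) := by
      rw [hz, mul_assoc, conj_mul_self_eq]
      push_cast; ring
    have hczu : (starRingEnd ℂ) z * (starRingEnd ℂ) u = ((t * ‖u‖ ^ 2 : ℝ) : ℂ) := by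
      rw [← map_mul, hzu, Complex.conj_ofReal]
    have hz2 : (starRingEnd ℂ) z * z = ((t * t * ‖u‖ ^ 2 : ℝ) : ℂ) := by
      rw [hz, map_mul, Complex.conj_ofReal, Complex.conj_conj]
      rw [show ((t:ℂ) * u) * ((t:ℂ) * (starRingEnd ℂ) u)
          = (t:ℂ) * (t:ℂ) * ((starRingEnd ℂ) u * u) by ring, conj_mul_self_eq]
      push_cast; ring
    have hyx : (⟪T y, x⟫ : ℂ) = (starRingEnd ℂ) u := by
      rw [hu, hsym x y, ← inner_conj_symm]
    have expand : (⟪T (x + z • y), x + z • y⟫ : ℂ)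
        = ⟪T x, x⟫ + ((t * ‖u‖ ^ 2 : ℝ) : ℂ) + ((t * ‖u‖ ^ 2 : ℝ) : ℂ)
          + ((t * t * ‖u‖ ^ 2 : ℝ) : ℂ) * ⟪T y, y⟫ := by
      rw [map_add, map_smul, inner_add_left, inner_add_right, inner_add_right,
        inner_smul_left, inner_smul_right, inner_smul_left, inner_smul_right, hyx, ← hu]
      rw [show (z : ℂ) * u = z * u from rfl]
      rw [← mul_assoc ((starRingEnd ℂ) z) z, hzu, hczu, hz2]
      ring
    rw [expand] at h1
    simp only [Complex.add_re, Complex.ofReal_re, Complex.mul_re, Complex.ofReal_im,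
      RCLike.re_to_complex] at h1 ⊢
    nlinarith [h1]
  have hd := discrim_le_zero key
  rw [discrim] at hd
  have hun : (0:ℝ) < ‖u‖ ^ 2 := pow_pos (norm_pos_iff.mpr h0) 2
  nlinarith [hd, hun]


/-- On the span of eigenspaces with eigenvalue `≥ e`, the quadratic form is `≥ e‖v‖²`. -/
lemma quad_lower (T : H →L[ℂ] H) (hT : IsSelfAdjoint T) (e : ℝ) {v : H}
    (hv : v ∈ ⨆ r : {r : ℝ // e ≤ r},
      Module.End.eigenspace (T : H →ₗ[ℂ] H) ((r : ℝ) : ℂ)) :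
    e * ‖v‖ ^ 2 ≤ RCLike.re ⟪T v, v⟫ := by
  classical
  set p : {r : ℝ // e ≤ r} → Submodule ℂ H := fun r =>
    Module.End.eigenspace (T : H →ₗ[ℂ] H) ((r : ℝ) : ℂ) with hp
  rw [Submodule.mem_iSup_iff_exists_dfinsupp'] at hv
  obtain ⟨f, rfl⟩ := hv
  have hsym : (T : H →ₗ[ℂ] H).IsSymmetric := hT.isSymmetric
  have hofam : OrthogonalFamily ℂ (fun r : {r : ℝ // e ≤ r} => p r)
      (fun r => (p r).subtypeₗᵢ) := by
    refine hsym.orthogonalFamily_eigenspaces.comp (fun r s hrs => ?_)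
    exact Subtype.ext (by exact_mod_cast hrs)
  -- the sum is over the support of f
  have hsum : (f.sum fun i xi => (xi : H)) = ∑ i ∈ f.support, ((p i).subtypeₗᵢ (f i)) := rfl
  have happ : ∀ i : {r : ℝ // e ≤ r}, T ((f i : H)) = (((i : ℝ) : ℂ) • f i : p i) := by
    intro i
    have := (f i).2
    rw [Module.End.mem_eigenspace_iff] at this
    exact this
  have hTv : T (f.sum fun i xi => (xi : H))
      = ∑ i ∈ f.support, ((p i).subtypeₗᵢ ((((i : ℝ) : ℂ) • f i : p i))) := by
    rw [hsum, map_sum]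
    exact Finset.sum_congr rfl fun i _ => happ i
  rw [hTv, hsum]
  rw [hofam.inner_sum (fun i => (((i : ℝ) : ℂ) • f i : p i)) (fun i => f i) f.support]
  have hnorm : ‖∑ i ∈ f.support, ((p i).subtypeₗᵢ (f i))‖ ^ 2
      = ∑ i ∈ f.support, ‖(f i : H)‖ ^ 2 := by
    rw [← inner_self_eq_norm_sq (𝕜 := ℂ),
      hofam.inner_sum (fun i => f i) (fun i => f i) f.support]
    rw [map_sum]
    exact Finset.sum_congr rfl fun i _ => by
      rw [Submodule.coe_inner, inner_self_eq_norm_sq]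
  rw [hnorm, Finset.mul_sum, map_sum]
  refine Finset.sum_le_sum fun i _ => ?_
  have : (⟪(((i : ℝ) : ℂ) • f i : p i), f i⟫ : ℂ) = ((i : ℝ) : ℂ) * ⟪(f i : H), (f i : H)⟫ := by
    rw [Submodule.coe_inner, Submodule.coe_smul, inner_smul_left, Complex.conj_ofReal]
  rw [this]
  have hre : RCLike.re (((i : ℝ) : ℂ) * (⟪(f i : H), (f i : H)⟫ : ℂ))
      = (i : ℝ) * ‖(f i : H)‖ ^ 2 := by
    rw [RCLike.re_to_complex, Complex.mul_re, Complex.ofReal_re, Complex.ofReal_im,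
      zero_mul, sub_zero, ← RCLike.re_to_complex, inner_self_eq_norm_sq]
  rw [hre]
  have := i.2
  nlinarith [sq_nonneg ‖(f i : H)‖, this]


/-- From a bounded sequence, a compact operator image has a convergent subsequence. -/
lemma compact_subseq (T : H →L[ℂ] H) (hc : IsCompactOperator ⇑T) (v : ℕ → H)
    (hv : ∀ n, ‖v n‖ ≤ 1) :
    ∃ (w : H) (φ : ℕ → ℕ), StrictMono φ ∧
      Tendsto (fun n => T (v (φ n))) atTop (𝓝 w) := by
  obtain ⟨K, hK, hKmem⟩ := hc
  obtain ⟨r, hr, hball⟩ := Metric.mem_nhds_iff.mp hKmem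
  set c : ℝ := r / 2 with hcdef
  have hc0 : 0 < c := by positivity
  have hmem : ∀ n, T (((c : ℂ)) • v n) ∈ K := by
    intro n
    apply hball
    rw [Metric.mem_ball, dist_zero_right, norm_smul, Complex.norm_real, Real.norm_eq_abs,
      abs_of_pos hc0]
    calc c * ‖v n‖ ≤ c * 1 := by nlinarith [hv n]
      _ < r := by rw [mul_one]; linarith
  obtain ⟨a, -, φ, hφ, ha⟩ := hK.tendsto_subseq hmem
  refine ⟨(c : ℂ)⁻¹ • a, φ, hφ, ?_⟩
  have : ∀ n, T (v (φ n)) = (c : ℂ)⁻¹ • T (((c : ℂ)) • v (φ n)) := by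
    intro n
    rw [map_smul, smul_smul]
    rw [inv_mul_cancel₀ (by exact_mod_cast ne_of_gt hc0), one_smul]
  simp only [this]
  exact ha.const_smul _

/-- A submodule on which a compact operator has quadratic form `≥ e‖v‖²` is
finite-dimensional. -/
lemma fd_of_lower (T : H →L[ℂ] H) (hc : IsCompactOperator ⇑T) (e : ℝ) (he : 0 < e)
    (S : Submodule ℂ H) (hS : ∀ v ∈ S, e * ‖v‖ ^ 2 ≤ RCLike.re ⟪T v, v⟫) :
    FiniteDimensional ℂ S := by
  set C := S.topologicalClosure with hC
  have hCbound : ∀ v ∈ C, e * ‖v‖ ^ 2 ≤ RCLike.re ⟪T v, v⟫ := by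
    have hclosed : IsClosed {v : H | e * ‖v‖ ^ 2 ≤ RCLike.re ⟪T v, v⟫} := by
      apply isClosed_le
      · exact (continuous_const.mul ((continuous_norm).pow 2))
      · exact (RCLike.continuous_re).comp ((T.continuous.inner continuous_id))
    intro v hv
    have : (C : Set H) ⊆ {v : H | e * ‖v‖ ^ 2 ≤ RCLike.re ⟪T v, v⟫} := by
      rw [hC, Submodule.topologicalClosure_coe]
      exact closure_minimal hS hclosed
    exact this hv
  have hcomp : IsCompact (Metric.closedBall (0 : C) 1) := by
    apply IsSeqCompact.isCompact
    intro u hu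
    have hnorm : ∀ n, ‖((u n : H))‖ ≤ 1 := by
      intro n
      have := hu n
      rw [Metric.mem_closedBall, dist_zero_right] at this
      exact this
    obtain ⟨w, φ, hφ, hw⟩ := compact_subseq T hc (fun n => (u n : H)) hnorm
    -- the subsequence is Cauchy
    have hcauchy : CauchySeq (fun n => ((u (φ n) : H))) := by
      rw [Metric.cauchySeq_iff]
      intro ε hε
      have hw' : CauchySeq (fun n => T ((u (φ n) : H))) := hw.cauchySeq
      rw [Metric.cauchySeq_iff] at hw'
      obtain ⟨N, hN⟩ := hw' (e * ε ^ 2 / 2) (by positivity)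
      refine ⟨N, fun m hm n hn => ?_⟩
      have hd : ((u (φ m) : H)) - ((u (φ n) : H)) ∈ C := C.sub_mem (u (φ m)).2 (u (φ n)).2
      have h1 := hCbound _ hd
      have h2 : RCLike.re ⟪T (((u (φ m) : H)) - ((u (φ n) : H))),
          ((u (φ m) : H)) - ((u (φ n) : H))⟫
          ≤ ‖T (((u (φ m) : H)) - ((u (φ n) : H)))‖ * ‖((u (φ m) : H)) - ((u (φ n) : H))‖ :=
        re_inner_le_norm _ _
      have h3 : ‖((u (φ m) : H)) - ((u (φ n) : H))‖ ≤ 2 := by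
        calc ‖((u (φ m) : H)) - ((u (φ n) : H))‖ ≤ ‖(u (φ m) : H)‖ + ‖(u (φ n) : H)‖ :=
          norm_sub_le _ _
        _ ≤ 2 := by linarith [hnorm (φ m), hnorm (φ n)]
      have h4 : ‖T (((u (φ m) : H)) - ((u (φ n) : H)))‖ < e * ε ^ 2 / 2 := by
        have := hN m hm n hn
        rwa [dist_eq_norm, ← map_sub] at this
      rw [dist_eq_norm]
      by_contra hcon
      push_neg at hcon
      have h5 : e * ε ^ 2 ≤ e * ‖((u (φ m) : H)) - ((u (φ n) : H))‖ ^ 2 := by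
        have := sq_le_sq' (by linarith [norm_nonneg (((u (φ m) : H)) - ((u (φ n) : H)))]) hcon
        nlinarith [hcon, hε, norm_nonneg (((u (φ m) : H)) - ((u (φ n) : H)))]
      nlinarith [h1, h2, h3, h4, norm_nonneg (T (((u (φ m) : H)) - ((u (φ n) : H))))]
    obtain ⟨x, hx⟩ := cauchySeq_tendsto_of_complete hcauchy
    have hxC : x ∈ C := by
      have : IsClosed (C : Set H) := S.isClosed_topologicalClosure
      exact this.mem_of_tendsto hx (Eventually.of_forall fun n => (u (φ n)).2)
    have hxnorm : ‖x‖ ≤ 1 := by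
      have : Tendsto (fun n => ‖((u (φ n) : H))‖) atTop (𝓝 ‖x‖) := hx.norm
      exact le_of_tendsto this (Eventually.of_forall fun n => hnorm (φ n))
    refine ⟨⟨x, hxC⟩, ?_, φ, hφ, ?_⟩
    · rw [Metric.mem_closedBall, dist_zero_right]
      exact hxnorm
    · rw [tendsto_subtype_rng]
      exact hx
  have : FiniteDimensional ℂ C := FiniteDimensional.of_isCompact_closedBall₀ ℂ one_pos hcomp
  exact Submodule.finiteDimensional_of_le S.le_topologicalClosure


lemma re_ofReal_mul (c : ℝ) (z : ℂ) : RCLike.re ((c : ℂ) * z) = c * RCLike.re z := by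
  simp [RCLike.re_to_complex, Complex.mul_re]

lemma re_inner_smul_smul (T : H →L[ℂ] H) (c : ℝ) (u : H) :
    RCLike.re ⟪T (((c : ℂ)) • u), ((c : ℂ)) • u⟫ = c * c * RCLike.re ⟪T u, u⟫ := by
  rw [map_smul, inner_smul_left, inner_smul_right, Complex.conj_ofReal, ← mul_assoc,
    ← Complex.ofReal_mul, re_ofReal_mul]

/-- If a closed invariant subspace `K` of a compact positive operator contains no eigenvector
with eigenvalue `≥ e`, then the quadratic form is `< e‖v‖²` on `K` (for `v ≠ 0`). -/
lemma no_big_rayleigh (T : H →L[ℂ] H) (hT : T.IsPositive) (hc : IsCompactOperator ⇑T)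
    (e : ℝ) (he : 0 < e) (K : Submodule ℂ H) (hKc : IsClosed (K : Set H))
    (hinv : ∀ v ∈ K, T v ∈ K)
    (heig : ∀ s : ℝ, e ≤ s → ∀ u ∈ K, T u = (s : ℂ) • u → u = 0) :
    ∀ v ∈ K, e * ‖v‖ ^ 2 ≤ RCLike.re ⟪T v, v⟫ → v = 0 := by
  intro v hvK hvre
  by_contra hv0
  set A : Set ℝ := (fun u => RCLike.re ⟪T u, u⟫) '' {u : H | u ∈ K ∧ ‖u‖ ≤ 1} with hA
  have hAne : A.Nonempty := ⟨0, ⟨0, ⟨K.zero_mem, by simp⟩, by simp⟩⟩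
  have hAbdd : BddAbove A := by
    refine ⟨‖T‖, fun x hx => ?_⟩
    obtain ⟨u, ⟨huK, hun⟩, rfl⟩ := hx
    calc RCLike.re ⟪T u, u⟫ ≤ ‖T u‖ * ‖u‖ := re_inner_le_norm _ _
      _ ≤ (‖T‖ * ‖u‖) * ‖u‖ := by
          have := T.le_opNorm u
          nlinarith [norm_nonneg u, norm_nonneg (T u), norm_nonneg T]
      _ ≤ ‖T‖ := by nlinarith [norm_nonneg T, norm_nonneg u, hun,
            mul_nonneg (norm_nonneg (T : H →L[ℂ] H)) (norm_nonneg u)]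
  set s : ℝ := sSup A with hs
  have hv0' : (0:ℝ) < ‖v‖ := norm_pos_iff.mpr hv0
  have e1v : ‖v‖⁻¹ * ‖v‖ = 1 := inv_mul_cancel₀ (ne_of_gt hv0')
  have hse : e ≤ s := by
    refine le_csSup_of_le hAbdd ⟨((‖v‖⁻¹ : ℝ) : ℂ) • v, ⟨K.smul_mem _ hvK, by
        rw [norm_smul, Complex.norm_real, Real.norm_eq_abs, abs_of_pos (by positivity),
          inv_mul_cancel₀ (ne_of_gt hv0')]⟩, rfl⟩ ?_
    show e ≤ RCLike.re ⟪T (((‖v‖⁻¹ : ℝ) : ℂ) • v), ((‖v‖⁻¹ : ℝ) : ℂ) • v⟫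
    rw [re_inner_smul_smul]
    have h6 : (‖v‖⁻¹ * ‖v‖⁻¹) * (e * ‖v‖ ^ 2) ≤ (‖v‖⁻¹ * ‖v‖⁻¹) * RCLike.re ⟪T v, v⟫ :=
      mul_le_mul_of_nonneg_left hvre (by positivity)
    have h7 : (‖v‖⁻¹ * ‖v‖⁻¹) * (e * ‖v‖ ^ 2) = e := by
      rw [sq]
      rw [show (‖v‖⁻¹ * ‖v‖⁻¹) * (e * (‖v‖ * ‖v‖))
        = (‖v‖⁻¹ * ‖v‖) * ((‖v‖⁻¹ * ‖v‖) * e) by ring, e1v]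
      ring
    linarith [h6, h7]
  have hs0 : 0 < s := lt_of_lt_of_le he hse
  have hbound : ∀ u ∈ K, RCLike.re ⟪T u, u⟫ ≤ s * ‖u‖ ^ 2 := by
    intro u huK
    rcases eq_or_ne u 0 with rfl | hu0
    · simp
    · have hn : (0:ℝ) < ‖u‖ := norm_pos_iff.mpr hu0
      have e1u : ‖u‖⁻¹ * ‖u‖ = 1 := inv_mul_cancel₀ (ne_of_gt hn)
      have hmem : RCLike.re ⟪T (((‖u‖⁻¹ : ℝ) : ℂ) • u), ((‖u‖⁻¹ : ℝ) : ℂ) • u⟫ ∈ A :=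
        ⟨_, ⟨K.smul_mem _ huK, by
          rw [norm_smul, Complex.norm_real, Real.norm_eq_abs, abs_of_pos (by positivity),
            inv_mul_cancel₀ (ne_of_gt hn)]⟩, rfl⟩
      have h1 := le_csSup hAbdd hmem
      rw [re_inner_smul_smul] at h1
      have h4 : (‖u‖⁻¹ * ‖u‖⁻¹ * RCLike.re ⟪T u, u⟫) * ‖u‖ ^ 2 ≤ s * ‖u‖ ^ 2 :=
        mul_le_mul_of_nonneg_right h1 (sq_nonneg _)
      have h5 : (‖u‖⁻¹ * ‖u‖⁻¹ * RCLike.re ⟪T u, u⟫) * ‖u‖ ^ 2 = RCLike.re ⟪T u, u⟫ := by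
        rw [sq]
        rw [show (‖u‖⁻¹ * ‖u‖⁻¹ * RCLike.re ⟪T u, u⟫) * (‖u‖ * ‖u‖)
          = (‖u‖⁻¹ * ‖u‖) * ((‖u‖⁻¹ * ‖u‖) * RCLike.re ⟪T u, u⟫) by ring, e1u]
        ring
      linarith [h4, h5]
  have hTnorm : ∀ u ∈ K, ‖T u‖ ≤ s * ‖u‖ := by
    intro u huK
    rcases eq_or_ne (T u) 0 with h | h
    · rw [h, norm_zero]; positivity
    · have hcs := pos_cs T hT u (T u)
      have h1 : ‖(⟪T u, T u⟫ : ℂ)‖ = ‖T u‖ ^ 2 := by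
        rw [inner_self_eq_norm_sq_to_K, norm_pow, RCLike.norm_ofReal, abs_norm]
      rw [h1] at hcs
      have h2 := hbound u huK
      have h3 := hbound (T u) (hinv u huK)
      have hTu : (0:ℝ) < ‖T u‖ := norm_pos_iff.mpr h
      have hmul : RCLike.re ⟪T u, u⟫ * RCLike.re ⟪T (T u), T u⟫
          ≤ (s * ‖u‖ ^ 2) * (s * ‖T u‖ ^ 2) :=
        mul_le_mul h2 h3 (hT.2 (T u)) (by positivity)
      have ha4 : (‖T u‖ ^ 2) ^ 2 ≤ (s * ‖u‖ ^ 2) * (s * ‖T u‖ ^ 2) := le_trans hcs hmul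
      have ha2 : ‖T u‖ ^ 2 ≤ (s * ‖u‖) ^ 2 := by
        nlinarith [ha4, mul_pos hTu hTu, hTu]
      nlinarith [ha2, hTu, mul_nonneg hs0.le (norm_nonneg u),
        sq_nonneg (‖T u‖ - s * ‖u‖), sq_nonneg (‖T u‖ + s * ‖u‖)]
  -- maximizing sequence
  have hex : ∀ n : ℕ, ∃ u : H, u ∈ K ∧ ‖u‖ ≤ 1 ∧ s - 1 / (n + 1) < RCLike.re ⟪T u, u⟫ := by
    intro n
    obtain ⟨a, ha, hlt⟩ := exists_lt_of_lt_csSup hAne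
      (show s - 1 / (n + 1 : ℝ) < s by
        have : (0:ℝ) < 1 / (n + 1 : ℝ) := by positivity
        linarith)
    obtain ⟨u, ⟨huK, hun⟩, rfl⟩ := ha
    exact ⟨u, huK, hun, hlt⟩
  choose u huK hun hur using hex
  set rr : ℕ → ℝ := fun n => RCLike.re ⟪T (u n), u n⟫ with hrr
  have hrle : ∀ n, rr n ≤ s := fun n => le_csSup hAbdd ⟨u n, ⟨huK n, hun n⟩, rfl⟩
  have hrtend : Tendsto rr atTop (𝓝 s) := by
    have hlow : Tendsto (fun n : ℕ => s - 1 / (n + 1 : ℝ)) atTop (𝓝 (s - 0)) :=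
      tendsto_const_nhds.sub tendsto_one_div_add_atTop_nhds_zero_nat
    rw [sub_zero] at hlow
    exact tendsto_of_tendsto_of_tendsto_of_le_of_le hlow tendsto_const_nhds
      (fun n => le_of_lt (hur n)) hrle
  have hdiff : ∀ n, ‖T (u n) - (s : ℂ) • u n‖ ^ 2 ≤ 2 * s ^ 2 - 2 * s * rr n := by
    intro n
    have hns : ‖T (u n) - (s : ℂ) • u n‖ ^ 2
        = ‖T (u n)‖ ^ 2 - 2 * RCLike.re ⟪T (u n), (s : ℂ) • u n⟫ + ‖(s : ℂ) • u n‖ ^ 2 :=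
      norm_sub_sq _ _
    have h1 : RCLike.re ⟪T (u n), (s : ℂ) • u n⟫ = s * rr n := by
      rw [inner_smul_right, re_ofReal_mul]
    have h2a : ‖u n‖ ^ 2 ≤ 1 := by nlinarith [hun n, norm_nonneg (u n)]
    have h2 : ‖(s : ℂ) • u n‖ ^ 2 ≤ s ^ 2 := by
      rw [norm_smul, Complex.norm_real, Real.norm_eq_abs, abs_of_pos hs0, mul_pow]
      nlinarith [h2a, sq_nonneg s]
    have h3 : ‖T (u n)‖ ^ 2 ≤ s ^ 2 := by
      have hb := hTnorm (u n) (huK n)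
      have h3a : ‖T (u n)‖ ≤ s := le_trans hb (by nlinarith [hun n, hs0])
      nlinarith [h3a, norm_nonneg (T (u n)), hs0]
    rw [hns, h1]
    linarith
  have htend0 : Tendsto (fun n => T (u n) - (s : ℂ) • u n) atTop (𝓝 0) := by
    rw [tendsto_zero_iff_norm_tendsto_zero]
    have hsq : Tendsto (fun n => ‖T (u n) - (s : ℂ) • u n‖ ^ 2) atTop (𝓝 0) := by
      apply squeeze_zero (fun n => by positivity) hdiff
      have : Tendsto (fun n => 2 * s ^ 2 - 2 * s * rr n) atTop
          (𝓝 (2 * s ^ 2 - 2 * s * s)) :=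
        tendsto_const_nhds.sub ((tendsto_const_nhds).mul hrtend)
      convert this using 2
      ring
    have := hsq.sqrt
    rw [Real.sqrt_zero] at this
    convert this using 2 with n
    rw [Real.sqrt_sq (norm_nonneg _)]
  obtain ⟨w, φ, hφ, hw⟩ := compact_subseq T hc u hun
  have htend0' : Tendsto (fun n => T (u (φ n)) - (s : ℂ) • u (φ n)) atTop (𝓝 0) :=
    htend0.comp (hφ.tendsto_atTop)
  have hsu : Tendsto (fun n => (s : ℂ) • u (φ n)) atTop (𝓝 w) := by
    have : Tendsto (fun n => T (u (φ n)) - (T (u (φ n)) - (s : ℂ) • u (φ n))) atTop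
        (𝓝 (w - 0)) := hw.sub htend0'
    rw [sub_zero] at this
    convert this using 2 with n
    rw [sub_sub_cancel]
  have hsne : ((s : ℂ)) ≠ 0 := by exact_mod_cast ne_of_gt hs0
  set x : H := (s : ℂ)⁻¹ • w with hx
  have hux : Tendsto (fun n => u (φ n)) atTop (𝓝 x) := by
    have h := hsu.const_smul ((s : ℂ)⁻¹)
    have heq : (fun n => ((s : ℂ)⁻¹ • ((s : ℂ) • u (φ n)))) = fun n => u (φ n) := by
      funext n
      rw [smul_smul, inv_mul_cancel₀ hsne, one_smul]
    rw [heq] at h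
    exact h
  have hxK : x ∈ K := hKc.mem_of_tendsto hux (Eventually.of_forall fun n => huK (φ n))
  have hTx : T x = (s : ℂ) • x := by
    have h1 : Tendsto (fun n => T (u (φ n))) atTop (𝓝 (T x)) :=
      (T.continuous.tendsto x).comp hux
    have h2 : (s : ℂ) • x = w := by rw [hx, smul_smul, mul_inv_cancel₀ hsne, one_smul]
    rw [h2]
    exact tendsto_nhds_unique h1 hw
  have hxre : RCLike.re ⟪T x, x⟫ = s := by
    have hcont : Continuous fun y : H => RCLike.re ⟪T y, y⟫ :=
      (RCLike.continuous_re).comp ((T.continuous.inner continuous_id))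
    have h1 : Tendsto (fun n => rr (φ n)) atTop (𝓝 (RCLike.re ⟪T x, x⟫)) :=
      ((hcont.tendsto x).comp hux)
    exact tendsto_nhds_unique h1 (hrtend.comp hφ.tendsto_atTop)
  have hx0 : x ≠ 0 := by
    intro h
    rw [h] at hxre
    simp at hxre
    rw [← hxre] at hs0
    exact lt_irrefl _ hs0
  exact hx0 (heig s hse x hxK hTx)


/-- the span of eigenspaces is invariant -/
lemma bigV_invariant (T : H →L[ℂ] H) (e : ℝ) :
    ∀ v ∈ (⨆ r : {r : ℝ // e ≤ r}, Module.End.eigenspace (T : H →ₗ[ℂ] H) ((r : ℝ) : ℂ)),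
      T v ∈ (⨆ r : {r : ℝ // e ≤ r}, Module.End.eigenspace (T : H →ₗ[ℂ] H) ((r : ℝ) : ℂ)) := by
  intro v hv
  set p : {r : ℝ // e ≤ r} → Submodule ℂ H := fun r =>
    Module.End.eigenspace (T : H →ₗ[ℂ] H) ((r : ℝ) : ℂ) with hp
  refine Submodule.iSup_induction p (motive := fun x => T x ∈ ⨆ r, p r) hv ?_ (by simp) ?_
  · intro i x hx
    have hx' : T x = ((i : ℝ) : ℂ) • x := by
      rwa [Module.End.mem_eigenspace_iff] at hx
    have : T x ∈ p i := by
      rw [hx']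
      exact (p i).smul_mem _ hx
    exact Submodule.mem_iSup_of_mem i this
  · intro x y hx hy
    rw [map_add]
    exact Submodule.add_mem _ hx hy

end Aux

/-- The number of eigenvalues `≥ μ` of an operator, counted with multiplicity
(as a cardinal): the sum of the dimensions of the eigenspaces belonging to
real eigenvalues `r ≥ μ`. -/
noncomputable def eigCount {H : Type*} [NormedAddCommGroup H] [InnerProductSpace ℂ H]
    (A : H →L[ℂ] H) (μ : ℝ) : Cardinal :=
  Cardinal.sum fun r : {r : ℝ // μ ≤ r} =>
    Module.rank ℂ (Module.End.eigenspace (A : H →ₗ[ℂ] H) ((r : ℝ) : ℂ))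

set_option maxHeartbeats 1000000 in
/-- For nonnegative compact self-adjoint operators `X₁, X₂` and
positive reals `e₁, e₂`, one has `n(X₁ + X₂, e₁ + e₂) ≤ n(X₁, e₁) + n(X₂, e₂)`. -/
theorem stmt2 {H : Type*} [NormedAddCommGroup H] [InnerProductSpace ℂ H] [CompleteSpace H]
    (X₁ X₂ : H →L[ℂ] H) (e₁ e₂ : ℝ) (he₁ : 0 < e₁) (he₂ : 0 < e₂)
    (hX₁ : X₁.IsPositive) (hX₂ : X₂.IsPositive)
    (hc₁ : IsCompactOperator (⇑X₁)) (hc₂ : IsCompactOperator (⇑X₂)) :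
    eigCount (X₁ + X₂) (e₁ + e₂) ≤ eigCount X₁ e₁ + eigCount X₂ e₂ := by
  classical
  have hT : (X₁ + X₂).IsPositive := hX₁.add hX₂
  have hcT : IsCompactOperator ⇑(X₁ + X₂) := hc₁.add hc₂
  set p : {r : ℝ // e₁ + e₂ ≤ r} → Submodule ℂ H := fun r =>
    Module.End.eigenspace ((X₁ + X₂ : H →L[ℂ] H) : H →ₗ[ℂ] H) ((r : ℝ) : ℂ) with hp
  set p₁ : {r : ℝ // e₁ ≤ r} → Submodule ℂ H := fun r =>
    Module.End.eigenspace (X₁ : H →ₗ[ℂ] H) ((r : ℝ) : ℂ) with hp₁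
  set p₂ : {r : ℝ // e₂ ≤ r} → Submodule ℂ H := fun r =>
    Module.End.eigenspace (X₂ : H →ₗ[ℂ] H) ((r : ℝ) : ℂ) with hp₂
  set W : Submodule ℂ H := ⨆ r, p r with hW
  set V₁ : Submodule ℂ H := ⨆ r, p₁ r with hV₁
  set V₂ : Submodule ℂ H := ⨆ r, p₂ r with hV₂
  have hV₁low : ∀ v ∈ V₁, e₁ * ‖v‖ ^ 2 ≤ RCLike.re ⟪X₁ v, v⟫ :=
    fun v hv => quad_lower X₁ hX₁.isSelfAdjoint e₁ hv
  have hV₂low : ∀ v ∈ V₂, e₂ * ‖v‖ ^ 2 ≤ RCLike.re ⟪X₂ v, v⟫ :=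
    fun v hv => quad_lower X₂ hX₂.isSelfAdjoint e₂ hv
  haveI hfd₁ : FiniteDimensional ℂ V₁ := fd_of_lower X₁ hc₁ e₁ he₁ V₁ hV₁low
  haveI hfd₂ : FiniteDimensional ℂ V₂ := fd_of_lower X₂ hc₂ e₂ he₂ V₂ hV₂low
  -- strict Rayleigh bound on orthogonal complements
  have hstrict : ∀ (X : H →L[ℂ] H) (e : ℝ), 0 < e → X.IsPositive → IsCompactOperator ⇑X →
      ∀ v ∈ (⨆ r : {r : ℝ // e ≤ r},
        Module.End.eigenspace (X : H →ₗ[ℂ] H) ((r : ℝ) : ℂ))ᗮ,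
        e * ‖v‖ ^ 2 ≤ RCLike.re ⟪X v, v⟫ → v = 0 := by
    intro X e he hX hcX
    set q : {r : ℝ // e ≤ r} → Submodule ℂ H := fun r =>
      Module.End.eigenspace (X : H →ₗ[ℂ] H) ((r : ℝ) : ℂ) with hq
    set V : Submodule ℂ H := ⨆ r, q r with hVd
    have hsym : (X : H →ₗ[ℂ] H).IsSymmetric := hX.isSelfAdjoint.isSymmetric
    apply no_big_rayleigh X hX hcX e he Vᗮ (Submodule.isClosed_orthogonal V)
    · intro v hv
      rw [Submodule.mem_orthogonal] at hv ⊢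
      intro u huV
      have h1 : (⟪u, X v⟫ : ℂ) = ⟪X u, v⟫ := (hsym u v).symm
      rw [h1]
      exact hv (X u) (bigV_invariant X e u huV)
    · intro s hs u huV hXu
      have huq : u ∈ q ⟨s, hs⟩ := by
        rw [hq]
        rw [Module.End.mem_eigenspace_iff]
        exact hXu
      have huVmem : u ∈ V := Submodule.mem_iSup_of_mem ⟨s, hs⟩ huq
      rw [Submodule.mem_orthogonal] at huV
      have := huV u huVmem
      rwa [inner_self_eq_zero] at this
  haveI : CompleteSpace V₁ := FiniteDimensional.complete ℂ V₁
  haveI : CompleteSpace V₂ := FiniteDimensional.complete ℂ V₂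
  -- the injection W →ₗ V₁ × V₂
  set F : W →ₗ[ℂ] V₁ × V₂ :=
    LinearMap.prod
      ((V₁.orthogonalProjectionOnto).toLinearMap.comp W.subtype)
      ((V₂.orthogonalProjectionOnto).toLinearMap.comp W.subtype) with hF
  have hker : ∀ z : W, F z = 0 → z = 0 := by
    intro z hz
    have h1 : V₁.orthogonalProjectionOnto (z : H) = 0 := congrArg Prod.fst hz
    have h2 : V₂.orthogonalProjectionOnto (z : H) = 0 := congrArg Prod.snd hz
    rw [Submodule.orthogonalProjectionOnto_eq_zero_iff] at h1 h2
    by_contra hz0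
    have hz0' : (z : H) ≠ 0 := fun h => hz0 (Subtype.ext h)
    have hzn : (0:ℝ) < ‖(z : H)‖ ^ 2 := by
      have := norm_pos_iff.mpr hz0'
      positivity
    have hWlow : (e₁ + e₂) * ‖(z : H)‖ ^ 2 ≤ RCLike.re ⟪(X₁ + X₂) (z : H), (z : H)⟫ :=
      quad_lower (X₁ + X₂) hT.isSelfAdjoint (e₁ + e₂) z.2
    have hsplit : RCLike.re ⟪(X₁ + X₂) (z : H), (z : H)⟫
        = RCLike.re ⟪X₁ (z : H), (z : H)⟫ + RCLike.re ⟪X₂ (z : H), (z : H)⟫ := by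
      rw [ContinuousLinearMap.add_apply, inner_add_left, map_add]
    have hlt₁ : RCLike.re ⟪X₁ (z : H), (z : H)⟫ < e₁ * ‖(z : H)‖ ^ 2 := by
      by_contra hcon
      push_neg at hcon
      exact hz0' (hstrict X₁ e₁ he₁ hX₁ hc₁ (z : H) h1 hcon)
    have hlt₂ : RCLike.re ⟪X₂ (z : H), (z : H)⟫ < e₂ * ‖(z : H)‖ ^ 2 := by
      by_contra hcon
      push_neg at hcon
      exact hz0' (hstrict X₂ e₂ he₂ hX₂ hc₂ (z : H) h2 hcon)
    rw [hsplit] at hWlow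
    nlinarith [hWlow, hlt₁, hlt₂, hzn]
  have hFinj : Function.Injective F := by
    intro a b hab
    have := hker (a - b) (by rw [map_sub, hab, sub_self])
    rwa [sub_eq_zero] at this
  -- independence and dfinsupp machinery
  have hInd : iSupIndep p := by
    have h := Module.End.eigenspaces_iSupIndep ((X₁ + X₂ : H →L[ℂ] H) : H →ₗ[ℂ] H)
    exact h.comp (fun r s hrs => Subtype.ext (by exact_mod_cast hrs))
  set L : (Π₀ i : {r : ℝ // e₁ + e₂ ≤ r}, p i) →ₗ[ℂ] H :=
    DFinsupp.lsum ℕ (fun i => (p i).subtype) with hL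
  have hLrange : LinearMap.range L = W := (Submodule.iSup_eq_range_dfinsupp_lsum p).symm
  have hLinj : Function.Injective L := hInd.dfinsupp_lsum_injective
  set L' : (Π₀ i : {r : ℝ // e₁ + e₂ ≤ r}, p i) →ₗ[ℂ] W :=
    L.codRestrict W (fun x => by rw [← hLrange]; exact LinearMap.mem_range_self L x) with hL'
  have hL'inj : Function.Injective L' := by
    intro a b hab
    apply hLinj
    have := congrArg (Subtype.val) hab
    exact this
  have hrankDom : Module.rank ℂ (Π₀ i : {r : ℝ // e₁ + e₂ ≤ r}, p i)
      = Cardinal.sum fun i : {r : ℝ // e₁ + e₂ ≤ r} => Module.rank ℂ (p i) :=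
    rank_directSum ℂ fun i => p i
  have step1 : eigCount (X₁ + X₂) (e₁ + e₂) ≤ Module.rank ℂ W := by
    rw [eigCount, ← hrankDom]
    exact LinearMap.rank_le_of_injective L' hL'inj
  have step2 : Module.rank ℂ W ≤ Module.rank ℂ V₁ + Module.rank ℂ V₂ := by
    calc Module.rank ℂ W ≤ Module.rank ℂ (V₁ × V₂) := LinearMap.rank_le_of_injective F hFinj
      _ = Module.rank ℂ V₁ + Module.rank ℂ V₂ := rank_prod'
  have step3 : Module.rank ℂ V₁ ≤ eigCount X₁ e₁ := by
    set L₁ : (Π₀ i : {r : ℝ // e₁ ≤ r}, p₁ i) →ₗ[ℂ] H :=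
      DFinsupp.lsum ℕ (fun i => (p₁ i).subtype) with hL₁
    have hL₁range : LinearMap.range L₁ = V₁ := (Submodule.iSup_eq_range_dfinsupp_lsum p₁).symm
    have h := LinearMap.rank_le_domain L₁
    rw [LinearMap.rank, hL₁range] at h
    rw [eigCount]
    calc Module.rank ℂ V₁ ≤ Module.rank ℂ (Π₀ i : {r : ℝ // e₁ ≤ r}, p₁ i) := h
      _ = Cardinal.sum fun i : {r : ℝ // e₁ ≤ r} => Module.rank ℂ (p₁ i) :=
        rank_directSum ℂ fun i => p₁ i
  have step4 : Module.rank ℂ V₂ ≤ eigCount X₂ e₂ := by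
    set L₂ : (Π₀ i : {r : ℝ // e₂ ≤ r}, p₂ i) →ₗ[ℂ] H :=
      DFinsupp.lsum ℕ (fun i => (p₂ i).subtype) with hL₂
    have hL₂range : LinearMap.range L₂ = V₂ := (Submodule.iSup_eq_range_dfinsupp_lsum p₂).symm
    have h := LinearMap.rank_le_domain L₂
    rw [LinearMap.rank, hL₂range] at h
    rw [eigCount]
    calc Module.rank ℂ V₂ ≤ Module.rank ℂ (Π₀ i : {r : ℝ // e₂ ≤ r}, p₂ i) := h
      _ = Cardinal.sum fun i : {r : ℝ // e₂ ≤ r} => Module.rank ℂ (p₂ i) :=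
        rank_directSum ℂ fun i => p₂ i
  calc eigCount (X₁ + X₂) (e₁ + e₂) ≤ Module.rank ℂ W := step1
    _ ≤ Module.rank ℂ V₁ + Module.rank ℂ V₂ := step2
    _ ≤ eigCount X₁ e₁ + eigCount X₂ e₂ := add_le_add step3 step4
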